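/- Let G be a connected graph and let f, g : {0,...,ℓ} → V(G) be walks on the path graph P_n (n ≥ 3, vertices 1,...,n in natural order) such that the distance d(f(0), g(0)) is even. If f is surjective (visits all vertices), then there exists a time t ∈ {0,...,ℓ} with f(t) = g(t). -/

import Mathlib

open SimpleGraph

private lemma walk_parity {n : ℕ} {u v : Fin n} (p : (pathGraph n).Walk u v) :
    (p.length + u.val + v.val) % 2 = 0 := by
  induction p with
  | nil => simp; omega
  | @cons a b c hadj p ih =>
    rw [pathGraph_adj] at hadj
    simp only [SimpleGraph.Walk.length_cons]
    omega

private lemma ivt (h : ℕ → ℤ) (a b : ℕ) (hab : a ≤ b)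
    (hstep : ∀ t, a ≤ t → t < b → h (t + 1) ≤ h t + 2)
    (ha : h a ≤ 0) (hb : 0 ≤ h b)
    (heven : ∀ t, a ≤ t → t ≤ b → Even (h t)) :
    ∃ t, a ≤ t ∧ t ≤ b ∧ h t = 0 := by
  obtain ⟨d, hd⟩ : ∃ d, b - a = d := ⟨b - a, rfl⟩
  induction d generalizing a with
  | zero =>
    have : a = b := by omega
    subst this
    exact ⟨a, le_refl _, le_refl _, le_antisymm ha hb⟩
  | succ d ih =>
    by_cases h0 : h a = 0
    · exact ⟨a, le_refl _, by omega, h0⟩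
    · have hev := heven a (le_refl _) hab
      have : h a ≤ -2 := by
        obtain ⟨k, hk⟩ := hev
        omega
      have hstep1 := hstep a (le_refl _) (by omega)
      obtain ⟨t, ht1, ht2, ht3⟩ := ih (a + 1) (by omega)
        (fun t h1 h2 => hstep t (by omega) h2) (by omega)
        (fun t h1 h2 => heven t (by omega) h2) (by omega)
      exact ⟨t, by omega, ht2, ht3⟩

/-- On the path graph `P n` (n ≥ 3), if `f` and `g` are walks of length `ℓ` whose initial
distance is even and `f` visits all vertices, then they collide at some time. -/
theorem stmt_0 (n ℓ : ℕ) (hn : 3 ≤ n) (f g : ℕ → Fin n)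
    (hf : ∀ t < ℓ, (pathGraph n).Adj (f t) (f (t + 1)))
    (hg : ∀ t < ℓ, (pathGraph n).Adj (g t) (g (t + 1)))
    (hpar : Even ((pathGraph n).dist (f 0) (g 0)))
    (hsurj : ∀ v : Fin n, ∃ t ≤ ℓ, f t = v) :
    ∃ t ≤ ℓ, f t = g t := by
  -- initial parity: f 0 + g 0 even
  have hinit : ((f 0).val + (g 0).val) % 2 = 0 := by
    by_cases hd : (pathGraph n).dist (f 0) (g 0) = 0
    · have : f 0 = g 0 ∨ ¬ (pathGraph n).Reachable (f 0) (g 0) :=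
        SimpleGraph.dist_eq_zero_iff_eq_or_not_reachable.mp hd
      have hconn : (pathGraph n).Connected := by
        obtain ⟨m, rfl⟩ : ∃ m, n = m + 1 := ⟨n - 1, by omega⟩
        exact pathGraph_connected m
      rcases this with h | h
      · rw [h]; omega
      · exact absurd (hconn.preconnected _ _) h
    · obtain ⟨p, hp⟩ := SimpleGraph.exists_walk_of_dist_ne_zero hd
      have := walk_parity p
      obtain ⟨k, hk⟩ := hpar
      omega
  -- parity invariant along time
  have hpar2 : ∀ t ≤ ℓ, ((f t).val + (g t).val) % 2 = 0 := by
    intro t ht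
    induction t with
    | zero => exact hinit
    | succ t ih =>
      have h1 := pathGraph_adj.mp (hf t (by omega))
      have h2 := pathGraph_adj.mp (hg t (by omega))
      have := ih (by omega)
      omega
  set h : ℕ → ℤ := fun t => ((f t).val : ℤ) - ((g t).val : ℤ) with hh
  have heven : ∀ t ≤ ℓ, Even (h t) := by
    intro t ht
    have := hpar2 t ht
    refine ⟨((f t).val : ℤ) - ((f t).val + (g t).val) / 2, ?_⟩
    simp only [hh]
    omega
  have hstep : ∀ t < ℓ, h (t + 1) ≤ h t + 2 ∧ h t ≤ h (t + 1) + 2 := by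
    intro t ht
    have h1 := pathGraph_adj.mp (hf t ht)
    have h2 := pathGraph_adj.mp (hg t ht)
    simp only [hh]
    omega
  obtain ⟨t0, ht0, hf0⟩ := hsurj ⟨0, by omega⟩
  obtain ⟨t1, ht1, hf1⟩ := hsurj ⟨n - 1, by omega⟩
  have hg0 : (g t0).val ≤ n - 1 := by omega
  have h0le : h t0 ≤ 0 := by simp [hh, hf0]
  have h1ge : 0 ≤ h t1 := by
    simp only [hh, hf1]
    have := (g t1).isLt
    omega
  rcases le_total t0 t1 with hc | hc
  · obtain ⟨t, ha, hb, h0⟩ := ivt h t0 t1 hc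
      (fun t hta htb => (hstep t (by omega)).1)
      h0le h1ge (fun t hta htb => heven t (by omega))
    refine ⟨t, by omega, ?_⟩
    have : ((f t).val : ℤ) = ((g t).val : ℤ) := by simp only [hh] at h0; omega
    exact Fin.ext (by exact_mod_cast this)
  · obtain ⟨t, ha, hb, h0⟩ := ivt (fun t => -h t) t1 t0 hc
      (fun t hta htb => by have := (hstep t (by omega)).2; omega)
      (by omega) (by omega)
      (fun t hta htb => (heven t (by omega)).neg)
    refine ⟨t, by omega, ?_⟩
    have : ((f t).val : ℤ) = ((g t).val : ℤ) := by simp only [hh] at h0; omega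
    exact Fin.ext (by exact_mod_cast this)
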